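/- Let $S_n$ be binomial with parameters $n$ and $p$, and let $T_m$ be binomial with parameters $m$ and $q$, with $S_n$ and $T_m$ independent. Suppose $0 < c' < c$, $d > 0$, and $p \geq cq$. Then the probability that $T_m/m \geq (1/c')(S_n/n) + d/\min(n,m)$ is at most $(c'/c)^{c'd/(c'+1)}$. -/

import Mathlib

open MeasureTheory ENNReal

theorem pmf_prod_apply {α β : Type*} [Fintype α] [Fintype β] [MeasurableSpace α] [MeasurableSpace β]
    [MeasurableSingletonClass α] [MeasurableSingletonClass β]
    (p : PMF α) (q : PMF β) (s : Set (α × β)) [DecidablePred (· ∈ s)] :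
    (p.toMeasure.prod q.toMeasure) s = ∑ x ∈ Finset.univ.filter (· ∈ s), p x.1 * q x.2 := by
  classical
  have hs : MeasurableSet s := s.to_countable.measurableSet
  rw [Measure.prod_apply hs, lintegral_fintype]
  have h1 : ∀ a : α, q.toMeasure (Prod.mk a ⁻¹' s)
      = ∑ b ∈ Finset.univ.filter (fun b => (a, b) ∈ s), q b := by
    intro a
    rw [PMF.toMeasure_apply _ ((Prod.mk a ⁻¹' s).to_countable.measurableSet), tsum_fintype]
    rw [Finset.sum_filter]
    apply Finset.sum_congr rfl
    intro b _
    by_cases hb : (a, b) ∈ s <;> simp [Set.indicator, hb]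
  simp_rw [h1, p.toMeasure_apply_singleton _ (measurableSet_singleton _)]
  rw [Finset.sum_filter, ← Finset.univ_product_univ, Finset.sum_product]
  apply Finset.sum_congr rfl
  intro a _
  rw [Finset.sum_filter, Finset.sum_mul]
  apply Finset.sum_congr rfl
  intro b _
  by_cases hb : (a, b) ∈ s <;> simp [hb, mul_comm]

theorem binom_ofReal (n : ℕ) (p : ℝ) (hp0 : 0 ≤ p) (hp1 : p ≤ 1) (i : Fin (n+1)) :
    PMF.binomial (Real.toNNReal p) (Real.toNNReal_le_one.mpr hp1) n i
      = ENNReal.ofReal (p ^ (i : ℕ) * (1 - p) ^ (n - (i : ℕ)) * (n.choose i : ℝ)) := by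
  rw [PMF.binomial_apply, Fin.val_last]
  change (ENNReal.ofReal p) ^ _ * (1 - ENNReal.ofReal p) ^ _ * _ = _
  have h1 : (1 : ℝ≥0∞) - ENNReal.ofReal p = ENNReal.ofReal (1 - p) := by
    rw [← ENNReal.ofReal_one, ← ENNReal.ofReal_sub _ hp0]
  rw [h1, ← ENNReal.ofReal_pow hp0, ← ENNReal.ofReal_pow (by linarith),
    ← ENNReal.ofReal_natCast (n.choose i), ← ENNReal.ofReal_mul (pow_nonneg hp0 _),
    ← ENNReal.ofReal_mul (mul_nonneg (pow_nonneg hp0 _) (pow_nonneg (by linarith) _))]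

theorem exp_convex_aux {θ z : ℝ} (h0 : 0 ≤ θ) (h1 : θ ≤ 1) :
    Real.exp (θ * z) ≤ 1 - θ + θ * Real.exp z := by
  have := convexOn_exp.2 (Set.mem_univ z) (Set.mem_univ (0:ℝ)) h0 (by linarith : (0:ℝ) ≤ 1 - θ)
    (by ring)
  simp only [smul_eq_mul, mul_zero, add_zero, Real.exp_zero, mul_one] at this
  linarith

theorem binom_sum_aux (n : ℕ) (p t : ℝ) :
    ∑ i : Fin (n+1), p ^ (i:ℕ) * (1-p) ^ (n - (i:ℕ)) * (n.choose i : ℝ) * t ^ (i:ℕ)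
      = (p * t + (1 - p)) ^ n := by
  rw [add_pow, Fin.sum_univ_eq_sum_range (fun i => p ^ i * (1-p) ^ (n - i) * (n.choose i : ℝ) * t ^ i)]
  apply Finset.sum_congr rfl
  intro i _
  rw [mul_pow]
  ring

theorem core_ineq {c c' : ℝ} (hc' : 0 < c') (hcc : c' < c) :
    Real.exp (c' * Real.log (c/c') / (c'+1)) - 1
      ≤ c * (1 - Real.exp (-(Real.log (c/c') / (c'+1)))) := by
  have hc : 0 < c := hc'.trans hcc
  have hρ : (1:ℝ) < c / c' := (one_lt_div hc').mpr hcc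
  set X := Real.exp (c' * Real.log (c/c') / (c'+1)) with hX
  have hXval : X = (c / c') ^ (c' / (c'+1)) := by
    rw [Real.rpow_def_of_pos (by linarith), hX]; ring_nf
  have hY : Real.exp (-(Real.log (c/c') / (c'+1))) = X / (c / c') := by
    rw [hX, ← Real.exp_log (by linarith : (0:ℝ) < c / c'), ← Real.exp_sub, Real.exp_log (by linarith)]
    congr 1
    field_simp
    ring
  have hAM : X ≤ (1 + c) / (1 + c') := by
    have := Real.geom_mean_le_arith_mean2_weighted
      (w₁ := c'/(c'+1)) (w₂ := 1/(c'+1)) (p₁ := c/c') (p₂ := 1)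
      (by positivity) (by positivity) (by positivity) zero_le_one (by field_simp)
    rw [Real.one_rpow, mul_one, mul_one] at this
    rw [hXval]
    calc (c/c') ^ (c'/(c'+1)) ≤ c'/(c'+1) * (c/c') + 1/(c'+1) := this
    _ = (1 + c) / (1 + c') := by field_simp; ring
  rw [hY]
  have hcX : c * (X / (c/c')) = c' * X := by field_simp
  have : (1 + c') * X ≤ 1 + c := by
    calc (1+c') * X ≤ (1+c') * ((1+c)/(1+c')) := by
          apply mul_le_mul_of_nonneg_left hAM (by linarith)
      _ = 1 + c := by field_simp
  nlinarith

theorem key_ineq {c c' K n m : ℝ} (hc' : 0 < c') (hcc : c' < c) (hK : 0 < K)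
    (hKn : K ≤ n) (hKm : K ≤ m) :
    m * (Real.exp (c' * K * Real.log (c/c') / ((c'+1) * m)) - 1)
      ≤ n * c * (1 - Real.exp (-(K * Real.log (c/c') / ((c'+1) * n)))) := by
  have hc : 0 < c := hc'.trans hcc
  have hm : 0 < m := hK.trans_le hKm
  have hn : 0 < n := hK.trans_le hKn
  set L := Real.log (c/c') with hL
  have hL0 : 0 < L := Real.log_pos ((one_lt_div hc').mpr hcc)
  have hA : Real.exp (c' * K * L / ((c'+1) * m))
      ≤ 1 - K/m + (K/m) * Real.exp (c' * L / (c'+1)) := by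
    have h := exp_convex_aux (θ := K/m) (z := c' * L / (c'+1)) (by positivity)
      ((div_le_one hm).mpr hKm)
    have heq : (K/m) * (c' * L / (c'+1)) = c' * K * L / ((c'+1) * m) := by
      field_simp
    rwa [heq] at h
  have hB : Real.exp (-(K * L / ((c'+1) * n)))
      ≤ 1 - K/n + (K/n) * Real.exp (-(L / (c'+1))) := by
    have h := exp_convex_aux (θ := K/n) (z := -(L / (c'+1))) (by positivity)
      ((div_le_one hn).mpr hKn)
    have heq : (K/n) * (-(L / (c'+1))) = -(K * L / ((c'+1) * n)) := by
      field_simp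
    rwa [heq] at h
  have hC := core_ineq hc' hcc
  have hA' : m * (Real.exp (c' * K * L / ((c'+1) * m)) - 1)
      ≤ K * (Real.exp (c' * L / (c'+1)) - 1) := by
    have : m * (Real.exp (c' * K * L / ((c'+1) * m)) - 1)
        ≤ m * ((1 - K/m + (K/m) * Real.exp (c' * L / (c'+1))) - 1) :=
      mul_le_mul_of_nonneg_left (by linarith) hm.le
    calc m * (Real.exp (c' * K * L / ((c'+1) * m)) - 1)
        ≤ m * ((1 - K/m + (K/m) * Real.exp (c' * L / (c'+1))) - 1) := this
      _ = K * (Real.exp (c' * L / (c'+1)) - 1) := by field_simp; ring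
  have hB' : K * (1 - Real.exp (-(L / (c'+1))))
      ≤ n * (1 - Real.exp (-(K * L / ((c'+1) * n)))) := by
    have h2 := mul_le_mul_of_nonneg_left hB hn.le
    have h3 : n * (1 - K/n + K/n * Real.exp (-(L / (c'+1))))
        = n - K + K * Real.exp (-(L / (c'+1))) := by field_simp
    rw [h3] at h2
    nlinarith
  calc m * (Real.exp (c' * K * L / ((c'+1) * m)) - 1)
      ≤ K * (Real.exp (c' * L / (c'+1)) - 1) := hA'
    _ ≤ K * (c * (1 - Real.exp (-(L / (c'+1))))) :=
        mul_le_mul_of_nonneg_left hC hK.le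
    _ = c * (K * (1 - Real.exp (-(L / (c'+1))))) := by ring
    _ ≤ c * (n * (1 - Real.exp (-(K * L / ((c'+1) * n))))) :=
        mul_le_mul_of_nonneg_left hB' hc.le
    _ = n * c * (1 - Real.exp (-(K * L / ((c'+1) * n)))) := by ring

/-- Two-sample binomial large deviation bound: if `S_n` is binomial `(n, p)` and `T_m` is
binomial `(m, q)`, independent, `0 < c' < c`, `d > 0`, and `p ≥ c q`, then
`P(T_m/m ≥ (1/c')(S_n/n) + d/min(n,m)) ≤ (c'/c)^{c'd/(c'+1)}`. -/
theorem two_sample_binomial_large_deviation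
    (n m : ℕ) (hn : 0 < n) (hm : 0 < m)
    (p q : ℝ) (hq0 : 0 ≤ q) (hp1 : p ≤ 1) (hq1 : q ≤ 1)
    (c c' d : ℝ) (hc' : 0 < c') (hcc : c' < c) (hd : 0 < d) (hpq : c * q ≤ p) :
    ((PMF.binomial (Real.toNNReal p) (Real.toNNReal_le_one.mpr hp1) n).toMeasure.prod
      (PMF.binomial (Real.toNNReal q) (Real.toNNReal_le_one.mpr hq1) m).toMeasure)
      {x : Fin (n + 1) × Fin (m + 1) |
        (1 / c') * (((x.1 : ℕ) : ℝ) / n) + d / ((min n m : ℕ) : ℝ) ≤ ((x.2 : ℕ) : ℝ) / m}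
      ≤ ENNReal.ofReal ((c' / c) ^ (c' * d / (c' + 1))) := by
  classical
  have hc : 0 < c := hc'.trans hcc
  have hp0 : 0 ≤ p := le_trans (mul_nonneg hc.le hq0) hpq
  set A : Set (Fin (n + 1) × Fin (m + 1)) :=
    {x : Fin (n + 1) × Fin (m + 1) |
      (1 / c') * (((x.1 : ℕ) : ℝ) / n) + d / ((min n m : ℕ) : ℝ) ≤ ((x.2 : ℕ) : ℝ) / m} with hA
  set P : Fin (n+1) → ℝ := fun a => p ^ (a:ℕ) * (1-p) ^ (n - (a:ℕ)) * (n.choose a : ℝ) with hPdef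
  set Q : Fin (m+1) → ℝ := fun b => q ^ (b:ℕ) * (1-q) ^ (m - (b:ℕ)) * (m.choose b : ℝ) with hQdef
  have hPnn : ∀ a, 0 ≤ P a := fun a =>
    mul_nonneg (mul_nonneg (pow_nonneg hp0 _) (pow_nonneg (by linarith) _)) (by positivity)
  have hQnn : ∀ b, 0 ≤ Q b := fun b =>
    mul_nonneg (mul_nonneg (pow_nonneg hq0 _) (pow_nonneg (by linarith) _)) (by positivity)
  -- Step 1: express the measure as ofReal of a real sum
  have hμ : ((PMF.binomial (Real.toNNReal p) (Real.toNNReal_le_one.mpr hp1) n).toMeasure.prod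
      (PMF.binomial (Real.toNNReal q) (Real.toNNReal_le_one.mpr hq1) m).toMeasure) A
      = ENNReal.ofReal (∑ x ∈ Finset.univ.filter (· ∈ A), P x.1 * Q x.2) := by
    rw [pmf_prod_apply]
    rw [ENNReal.ofReal_sum_of_nonneg (fun x _ => mul_nonneg (hPnn x.1) (hQnn x.2))]
    apply Finset.sum_congr rfl
    intro x _
    rw [binom_ofReal n p hp0 hp1 x.1, binom_ofReal m q hq0 hq1 x.2,
      ← ENNReal.ofReal_mul (hPnn x.1)]
  rw [hμ]
  clear hμ
  apply ENNReal.ofReal_le_ofReal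
  -- real-number setup
  set Kr : ℝ := ((min n m : ℕ) : ℝ) with hKr
  have hK0 : 0 < Kr := by
    rw [hKr]
    exact_mod_cast Nat.cast_pos.mpr (lt_min hn hm)
  have hKn : Kr ≤ (n : ℝ) := by exact_mod_cast Nat.cast_le.mpr (min_le_left n m)
  have hKm : Kr ≤ (m : ℝ) := by exact_mod_cast Nat.cast_le.mpr (min_le_right n m)
  have hn0 : (0:ℝ) < n := hK0.trans_le hKn
  have hm0 : (0:ℝ) < m := hK0.trans_le hKm
  set L : ℝ := Real.log (c / c') with hLdef
  have hL0 : 0 < L := Real.log_pos ((one_lt_div hc').mpr hcc)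
  set t : ℝ := Real.exp (-(Kr * L / ((c'+1) * (n:ℝ)))) with htdef
  set s : ℝ := Real.exp (c' * Kr * L / ((c'+1) * (m:ℝ))) with hsdef
  have ht0 : 0 < t := Real.exp_pos _
  have ht1 : t ≤ 1 := Real.exp_le_one_iff.mpr (by
    rw [neg_nonpos]
    positivity)
  have hs1 : 1 ≤ s := Real.one_le_exp_iff.mpr (by positivity)
  set E : ℝ := c' * d * L / (c'+1) with hEdef
  clear_value Kr L t s E
  -- pointwise Markov bound
  have hpoint : ∀ x : Fin (n+1) × Fin (m+1), x ∈ A →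
      Real.exp E ≤ t ^ (x.1 : ℕ) * s ^ (x.2 : ℕ) := by
    rintro ⟨a, b⟩ hx
    rw [hA, Set.mem_setOf_eq] at hx
    have hx' : (1 / c') * (((a : ℕ) : ℝ) / n) + d / Kr ≤ ((b : ℕ) : ℝ) / m := hx
    set ar : ℝ := ((a : ℕ) : ℝ) with har
    set br : ℝ := ((b : ℕ) : ℝ) with hbr
    have hts : t ^ (a : ℕ) * s ^ (b : ℕ)
        = Real.exp (ar * (-(Kr * L / ((c'+1) * (n:ℝ)))) + br * (c' * Kr * L / ((c'+1) * (m:ℝ)))) := by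
      rw [htdef, hsdef, Real.exp_add, ← Real.exp_nat_mul, ← Real.exp_nat_mul]
    rw [hts]
    apply Real.exp_le_exp.mpr
    have hexpr : ar * (-(Kr * L / ((c'+1) * (n:ℝ)))) + br * (c' * Kr * L / ((c'+1) * (m:ℝ)))
        = (c' * Kr * L / (c'+1)) * (br / m - ar / (c' * n)) := by
      field_simp
      ring
    rw [hexpr]
    have hD : 0 < c' * Kr * L / (c'+1) := by positivity
    have hdiff : d / Kr ≤ br / m - ar / (c' * n) := by
      have : (1 / c') * (ar / n) = ar / (c' * n) := by
        field_simp
      linarith [hx', this ▸ hx']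
    calc E = (c' * Kr * L / (c'+1)) * (d / Kr) := by
          rw [hEdef]; field_simp
      _ ≤ (c' * Kr * L / (c'+1)) * (br / m - ar / (c' * n)) :=
          mul_le_mul_of_nonneg_left hdiff hD.le
  -- Markov step
  have hsum1 : ∑ x ∈ Finset.univ.filter (· ∈ A), P x.1 * Q x.2
      ≤ Real.exp (-E) * ∑ x : Fin (n+1) × Fin (m+1), P x.1 * Q x.2 * (t ^ (x.1:ℕ) * s ^ (x.2:ℕ)) := by
    calc ∑ x ∈ Finset.univ.filter (· ∈ A), P x.1 * Q x.2
        ≤ ∑ x ∈ Finset.univ.filter (· ∈ A),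
            Real.exp (-E) * (P x.1 * Q x.2 * (t ^ (x.1:ℕ) * s ^ (x.2:ℕ))) := by
          apply Finset.sum_le_sum
          intro x hx
          have hxA : x ∈ A := (Finset.mem_filter.mp hx).2
          have h1 : (1:ℝ) ≤ Real.exp (-E) * (t ^ (x.1:ℕ) * s ^ (x.2:ℕ)) := by
            have := mul_le_mul_of_nonneg_left (hpoint x hxA) (Real.exp_pos (-E)).le
            rwa [← Real.exp_add, neg_add_cancel, Real.exp_zero] at this
          calc P x.1 * Q x.2 = P x.1 * Q x.2 * 1 := by ring
            _ ≤ P x.1 * Q x.2 * (Real.exp (-E) * (t ^ (x.1:ℕ) * s ^ (x.2:ℕ))) :=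
                mul_le_mul_of_nonneg_left h1 (mul_nonneg (hPnn _) (hQnn _))
            _ = Real.exp (-E) * (P x.1 * Q x.2 * (t ^ (x.1:ℕ) * s ^ (x.2:ℕ))) := by ring
      _ ≤ ∑ x : Fin (n+1) × Fin (m+1),
            Real.exp (-E) * (P x.1 * Q x.2 * (t ^ (x.1:ℕ) * s ^ (x.2:ℕ))) := by
          apply Finset.sum_le_sum_of_subset_of_nonneg (Finset.filter_subset _ _)
          intro x _ _
          exact mul_nonneg (Real.exp_pos (-E)).le
            (mul_nonneg (mul_nonneg (hPnn x.1) (hQnn x.2))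
              (mul_nonneg (pow_nonneg ht0.le _) (pow_nonneg (by linarith : (0:ℝ) ≤ s) _)))
      _ = Real.exp (-E) * ∑ x : Fin (n+1) × Fin (m+1),
            P x.1 * Q x.2 * (t ^ (x.1:ℕ) * s ^ (x.2:ℕ)) := by
          rw [Finset.mul_sum]
  -- factor the sum
  have hfactor : ∑ x : Fin (n+1) × Fin (m+1), P x.1 * Q x.2 * (t ^ (x.1:ℕ) * s ^ (x.2:ℕ))
      = (∑ a : Fin (n+1), P a * t ^ (a:ℕ)) * (∑ b : Fin (m+1), Q b * s ^ (b:ℕ)) := by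
    rw [Finset.sum_mul_sum, Fintype.sum_prod_type]
    apply Finset.sum_congr rfl; intro a _
    apply Finset.sum_congr rfl; intro b _
    ring
  have hmgfP : ∑ a : Fin (n+1), P a * t ^ (a:ℕ) = (p * t + (1 - p)) ^ n := binom_sum_aux n p t
  have hmgfQ : ∑ b : Fin (m+1), Q b * s ^ (b:ℕ) = (q * s + (1 - q)) ^ m := binom_sum_aux m q s
  have hexpP : (p * t + (1 - p)) ^ n ≤ Real.exp ((n:ℝ) * (p * t - p)) := by
    have hb : 0 ≤ p * t + (1 - p) := add_nonneg (mul_nonneg hp0 ht0.le) (by linarith)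
    have hle : p * t + (1 - p) ≤ Real.exp (p * t - p) := by
      have := Real.add_one_le_exp (p * t - p)
      linarith
    calc (p * t + (1 - p)) ^ n ≤ Real.exp (p * t - p) ^ n := pow_le_pow_left₀ hb hle n
      _ = Real.exp ((n:ℝ) * (p * t - p)) := by rw [← Real.exp_nat_mul]
  have hexpQ : (q * s + (1 - q)) ^ m ≤ Real.exp ((m:ℝ) * (q * s - q)) := by
    have hb : 0 ≤ q * s + (1 - q) := add_nonneg (mul_nonneg hq0 (by linarith)) (by linarith)
    have hle : q * s + (1 - q) ≤ Real.exp (q * s - q) := by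
      have := Real.add_one_le_exp (q * s - q)
      linarith
    calc (q * s + (1 - q)) ^ m ≤ Real.exp (q * s - q) ^ m := pow_le_pow_left₀ hb hle m
      _ = Real.exp ((m:ℝ) * (q * s - q)) := by rw [← Real.exp_nat_mul]
  -- the key inequality
  have hkey : (m:ℝ) * (s - 1) ≤ (n:ℝ) * c * (1 - t) := by
    have := key_ineq (n := (n:ℝ)) (m := (m:ℝ)) hc' hcc hK0 hKn hKm
    rw [htdef, hsdef, hLdef]
    exact this
  have hle1 : Real.exp ((n:ℝ) * (p * t - p)) * Real.exp ((m:ℝ) * (q * s - q)) ≤ 1 := by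
    rw [← Real.exp_add, ← Real.exp_zero]
    apply Real.exp_le_exp.mpr
    have h1 : q * ((m:ℝ) * (s - 1)) ≤ q * ((n:ℝ) * c * (1 - t)) :=
      mul_le_mul_of_nonneg_left hkey hq0
    have h2 : ((n:ℝ) * (1 - t)) * (c * q) ≤ ((n:ℝ) * (1 - t)) * p :=
      mul_le_mul_of_nonneg_left hpq (mul_nonneg hn0.le (by linarith))
    linarith
  -- final chain
  have hfin : (p * t + (1 - p)) ^ n * (q * s + (1 - q)) ^ m ≤ 1 := by
    have hb1 : 0 ≤ q * s + (1 - q) := add_nonneg (mul_nonneg hq0 (by linarith)) (by linarith)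
    calc (p * t + (1 - p)) ^ n * (q * s + (1 - q)) ^ m
        ≤ Real.exp ((n:ℝ) * (p * t - p)) * Real.exp ((m:ℝ) * (q * s - q)) :=
          mul_le_mul hexpP hexpQ (pow_nonneg hb1 m) (Real.exp_pos _).le
      _ ≤ 1 := hle1
  have hrpow : (c' / c) ^ (c' * d / (c' + 1)) = Real.exp (-E) := by
    rw [Real.rpow_def_of_pos (by positivity)]
    congr 1
    have hlog : Real.log (c' / c) = -L := by
      rw [hLdef, ← Real.log_inv]
      congr 1
      field_simp
    rw [hlog, hEdef]
    ring
  calc ∑ x ∈ Finset.univ.filter (· ∈ A), P x.1 * Q x.2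
      ≤ Real.exp (-E) * ∑ x : Fin (n+1) × Fin (m+1), P x.1 * Q x.2 * (t ^ (x.1:ℕ) * s ^ (x.2:ℕ)) :=
        hsum1
    _ = Real.exp (-E) * ((p * t + (1 - p)) ^ n * (q * s + (1 - q)) ^ m) := by
        rw [hfactor, hmgfP, hmgfQ]
    _ ≤ Real.exp (-E) * 1 := mul_le_mul_of_nonneg_left hfin (Real.exp_pos _).le
    _ = (c' / c) ^ (c' * d / (c' + 1)) := by rw [mul_one, hrpow]
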